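/- Let n, d, r be positive integers and C > 0. Let Ω ⊆ {1,…,n}×{1,…,n} be the edge set of a d-regular bipartite graph whose biadjacency matrix G satisfies G1 and G2 with constant C, and let M ∈ ℝ^{n×n} be a rank-r matrix whose thin SVD satisfies the μ₀-incoherence assumption A1. Then for every k ≥ r, ‖(n/d)·P_k(P_Ω(M)) − M‖ ≤ (2·C·μ₀·r/√d)·‖M‖, where P_k(A) denotes a best rank-k approximation of A in spectral norm (obtained by truncating the SVD of A to its top k singular values) and ‖·‖ is the spectral norm. -/

import Mathlib

set_option maxHeartbeats 1000000


open Matrix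
open scoped BigOperators

noncomputable section

/-- Euclidean norm of a vector. -/
def vecNorm {β : Type*} [Fintype β] (x : β → ℝ) : ℝ :=
  Real.sqrt (∑ i, x i ^ 2)

/-- Spectral norm (largest singular value) of a real matrix. -/
def specNorm {α β : Type*} [Fintype α] [Fintype β] (A : Matrix α β ℝ) : ℝ :=
  sSup {c | ∃ x : β → ℝ, vecNorm x ≤ 1 ∧ c = vecNorm (A.mulVec x)}

/-- Second largest singular value of a real matrix (Courant–Fischer characterization). -/
def sigma2 {α β : Type*} [Fintype α] [Fintype β] (A : Matrix α β ℝ) : ℝ :=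
  ⨅ v : β → ℝ, sSup {c | ∃ x : β → ℝ,
    vecNorm x ≤ 1 ∧ (∑ i, v i * x i) = 0 ∧ c = vecNorm (A.mulVec x)}

/-- Frobenius norm. -/
def frobNorm {α β : Type*} [Fintype α] [Fintype β] (A : Matrix α β ℝ) : ℝ :=
  Real.sqrt (∑ i, ∑ j, A i j ^ 2)

/-- Nuclear norm: the sum of the singular values, i.e. the trace of `√(AᵀA)`. -/
def nuclearNorm {α β : Type*} [Fintype α] [Fintype β] [DecidableEq β]
    (A : Matrix α β ℝ) : ℝ :=
  ((Matrix.posSemidef_conjTranspose_mul_self A).1.eigenvectorUnitary.1 *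
    Matrix.diagonal ((Real.sqrt ·) ∘ (Matrix.posSemidef_conjTranspose_mul_self A).1.eigenvalues) *
    (star (Matrix.posSemidef_conjTranspose_mul_self A).1.eigenvectorUnitary : Matrix β β ℝ)).trace

/-- The sampling operator `P_Ω`. -/
def sampl {n : ℕ} (Ω : Finset (Fin n × Fin n)) (M : Matrix (Fin n) (Fin n) ℝ) :
    Matrix (Fin n) (Fin n) ℝ :=
  Matrix.of fun i j => if (i, j) ∈ Ω then M i j else 0

/-- The biadjacency matrix `G` of the bipartite graph with edge set `Ω`. -/
def biadj {n : ℕ} (Ω : Finset (Fin n × Fin n)) : Matrix (Fin n) (Fin n) ℝ :=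
  Matrix.of fun i j => if (i, j) ∈ Ω then (1 : ℝ) else 0

/-- `Ω` is the edge set of a `d`-regular bipartite graph: every row and every column
of `G` has exactly `d` ones. -/
def RegularSampling {n : ℕ} (Ω : Finset (Fin n × Fin n)) (d : ℕ) : Prop :=
  (∀ i : Fin n, (Finset.univ.filter fun j => (i, j) ∈ Ω).card = d) ∧
  (∀ j : Fin n, (Finset.univ.filter fun i => (i, j) ∈ Ω).card = d)

/-- Assumption G1: the all-ones vector is a top left- and right-singular vector of `G`,
with `σ₁(G) = d`. -/
def AssumptionG1 {n : ℕ} (Ω : Finset (Fin n × Fin n)) (d : ℕ) : Prop :=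
  specNorm (biadj Ω) = d ∧
  (biadj Ω).mulVec (fun _ => 1) = (fun _ => (d : ℝ)) ∧
  Matrix.vecMul (fun _ => 1) (biadj Ω) = (fun _ => (d : ℝ))

/-- Assumption G2: `σ₂(G) ≤ C·√d`. -/
def AssumptionG2 {n : ℕ} (Ω : Finset (Fin n × Fin n)) (d : ℕ) (C : ℝ) : Prop :=
  sigma2 (biadj Ω) ≤ C * Real.sqrt d

/-- Assumption A1 (`μ₀`-incoherence) for one factor: every row `U^i` satisfies
`‖U^i‖² ≤ μ₀ r / n`. -/
def IncoherentRows {n r : ℕ} (U : Matrix (Fin n) (Fin r) ℝ) (μ₀ : ℝ) : Prop :=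
  ∀ i : Fin n, (∑ k, U i k ^ 2) ≤ μ₀ * r / n

/-- Assumption A2 (strong incoherence with parameter `δ`) for one factor:
for every `S` with `|S| = d`, `‖(n/d)·∑_{k∈S} U^k (U^k)ᵀ − I‖ ≤ δ`. -/
def StrongIncoherence {n r : ℕ} (U : Matrix (Fin n) (Fin r) ℝ) (d : ℕ) (δ : ℝ) : Prop :=
  ∀ S : Finset (Fin n), S.card = d →
    specNorm (((n : ℝ) / (d : ℝ)) • (∑ k ∈ S, Matrix.vecMulVec (U k) (U k)) - 1) ≤ δ

/-- `M = U · diagonal s · Vᵀ` is a thin SVD of the rank-`r` matrix `M`. -/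
def IsThinSVD {n r : ℕ} (M : Matrix (Fin n) (Fin n) ℝ)
    (U : Matrix (Fin n) (Fin r) ℝ) (s : Fin r → ℝ) (V : Matrix (Fin n) (Fin r) ℝ) : Prop :=
  Uᵀ * U = 1 ∧ Vᵀ * V = 1 ∧ (∀ i, 0 < s i) ∧ M = U * Matrix.diagonal s * Vᵀ

/-- The projection `P_T` onto the subspace `T` spanned by matrices `UXᵀ` and `YVᵀ`. -/
def projT {n r : ℕ} (U V : Matrix (Fin n) (Fin r) ℝ) (Z : Matrix (Fin n) (Fin n) ℝ) :
    Matrix (Fin n) (Fin n) ℝ :=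
  U * Uᵀ * Z + Z * (V * Vᵀ) - U * Uᵀ * Z * (V * Vᵀ)

/-- The projection `P_{T⊥}` onto the orthogonal complement of `T`. -/
def projTperp {n r : ℕ} (U V : Matrix (Fin n) (Fin r) ℝ) (Z : Matrix (Fin n) (Fin n) ℝ) :
    Matrix (Fin n) (Fin n) ℝ :=
  (1 - U * Uᵀ) * Z * (1 - V * Vᵀ)

end

section AuxProofs

section vecN
variable {α β : Type*} [Fintype α] [Fintype β]

lemma vecNorm_eq_norm (x : β → ℝ) :
    vecNorm x = ‖(WithLp.equiv 2 (β → ℝ)).symm x‖ := by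
  rw [EuclideanSpace.norm_eq]
  simp [vecNorm, Real.norm_eq_abs, sq_abs]

lemma vecNorm_nonneg (x : β → ℝ) : 0 ≤ vecNorm x := Real.sqrt_nonneg _

lemma vecNorm_sq (x : β → ℝ) : vecNorm x ^ 2 = ∑ i, x i ^ 2 :=
  Real.sq_sqrt (Finset.sum_nonneg fun i _ => sq_nonneg _)

lemma vecNorm_zero : vecNorm (0 : β → ℝ) = 0 := by simp [vecNorm]

lemma vecNorm_eq_zero {x : β → ℝ} (h : vecNorm x = 0) : x = 0 := by
  have h2 : ∑ i, x i ^ 2 = 0 := by rw [← vecNorm_sq, h]; ring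
  funext i
  have := (Finset.sum_eq_zero_iff_of_nonneg (fun i _ => sq_nonneg (x i))).1 h2 i (Finset.mem_univ i)
  exact pow_eq_zero_iff (by norm_num) |>.1 this

lemma vecNorm_add_le (x y : β → ℝ) : vecNorm (x + y) ≤ vecNorm x + vecNorm y := by
  simp only [vecNorm_eq_norm]; exact_mod_cast norm_add_le _ _

lemma vecNorm_smul (c : ℝ) (x : β → ℝ) : vecNorm (c • x) = |c| * vecNorm x := by
  simp only [vecNorm_eq_norm]
  rw [show (WithLp.equiv 2 (β → ℝ)).symm (c • x) = c • (WithLp.equiv 2 (β → ℝ)).symm x from rfl,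
    norm_smul, Real.norm_eq_abs]

lemma vecNorm_neg (x : β → ℝ) : vecNorm (-x) = vecNorm x := by simp [vecNorm]

lemma abs_dot_le (x y : β → ℝ) : |∑ i, x i * y i| ≤ vecNorm x * vecNorm y := by
  have h := Finset.sum_mul_sq_le_sq_mul_sq Finset.univ x y
  have h2' : (∑ i, x i * y i)^2 ≤ (vecNorm x * vecNorm y)^2 := by
    rw [mul_pow, vecNorm_sq, vecNorm_sq]; exact h
  calc |∑ i, x i * y i| = Real.sqrt ((∑ i, x i * y i)^2) := (Real.sqrt_sq_eq_abs _).symm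
    _ ≤ Real.sqrt ((vecNorm x * vecNorm y)^2) := Real.sqrt_le_sqrt h2'
    _ = vecNorm x * vecNorm y := Real.sqrt_sq (mul_nonneg (vecNorm_nonneg x) (vecNorm_nonneg y))
end vecN

section specN
variable {α β : Type*} [Fintype α] [Fintype β]

lemma zero_mem_snset (A : Matrix α β ℝ) :
    (0:ℝ) ∈ {c | ∃ x : β → ℝ, vecNorm x ≤ 1 ∧ c = vecNorm (A.mulVec x)} :=
  ⟨0, by simp [vecNorm_zero], by simp [Matrix.mulVec_zero, vecNorm_zero]⟩

lemma vecNorm_mulVec_le_frob (A : Matrix α β ℝ) {x : β → ℝ} (hx : vecNorm x ≤ 1) :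
    vecNorm (A.mulVec x) ≤ Real.sqrt (∑ i, ∑ j, A i j ^ 2) := by
  have hx2 : ∑ j, x j ^ 2 ≤ 1 := by
    have := vecNorm_sq x
    nlinarith [vecNorm_nonneg x]
  refine Real.sqrt_le_sqrt (Finset.sum_le_sum fun i _ => ?_)
  have := Finset.sum_mul_sq_le_sq_mul_sq Finset.univ (fun j => A i j) x
  calc A.mulVec x i ^ 2 = (∑ j, A i j * x j)^2 := by rfl
    _ ≤ (∑ j, A i j ^2) * (∑ j, x j ^2) := this
    _ ≤ (∑ j, A i j ^2) * 1 := by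
        exact mul_le_mul_of_nonneg_left hx2 (Finset.sum_nonneg fun j _ => sq_nonneg _)
    _ = ∑ j, A i j ^2 := mul_one _

lemma bddAbove_snset (A : Matrix α β ℝ) :
    BddAbove {c | ∃ x : β → ℝ, vecNorm x ≤ 1 ∧ c = vecNorm (A.mulVec x)} := by
  refine ⟨Real.sqrt (∑ i, ∑ j, A i j ^ 2), ?_⟩
  rintro c ⟨x, hx, rfl⟩
  exact vecNorm_mulVec_le_frob A hx

lemma specNorm_nonneg (A : Matrix α β ℝ) : 0 ≤ specNorm A :=
  le_csSup (bddAbove_snset A) (zero_mem_snset A)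

lemma vecNorm_mulVec_le_specNorm_of_le_one (A : Matrix α β ℝ) {x : β → ℝ} (hx : vecNorm x ≤ 1) :
    vecNorm (A.mulVec x) ≤ specNorm A :=
  le_csSup (bddAbove_snset A) ⟨x, hx, rfl⟩

lemma vecNorm_mulVec_le (A : Matrix α β ℝ) (x : β → ℝ) :
    vecNorm (A.mulVec x) ≤ specNorm A * vecNorm x := by
  rcases eq_or_ne (vecNorm x) 0 with h | h
  · rw [vecNorm_eq_zero h, Matrix.mulVec_zero, vecNorm_zero]
    exact mul_nonneg (specNorm_nonneg A) (vecNorm_nonneg _)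
  have hpos : 0 < vecNorm x := lt_of_le_of_ne (vecNorm_nonneg x) (Ne.symm h)
  have hu : vecNorm ((vecNorm x)⁻¹ • x) = 1 := by
    rw [vecNorm_smul, abs_of_pos (inv_pos.2 hpos), inv_mul_cancel₀ h]
  have := vecNorm_mulVec_le_specNorm_of_le_one A hu.le
  rw [Matrix.mulVec_smul, vecNorm_smul, abs_of_pos (inv_pos.2 hpos)] at this
  calc vecNorm (A.mulVec x) = vecNorm x * ((vecNorm x)⁻¹ * vecNorm (A.mulVec x)) := by
        field_simp
    _ ≤ vecNorm x * specNorm A := mul_le_mul_of_nonneg_left this hpos.le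
    _ = specNorm A * vecNorm x := mul_comm _ _

lemma specNorm_le {A : Matrix α β ℝ} {K : ℝ}
    (h : ∀ x : β → ℝ, vecNorm x ≤ 1 → vecNorm (A.mulVec x) ≤ K) : specNorm A ≤ K := by
  refine csSup_le ⟨0, zero_mem_snset A⟩ ?_
  rintro c ⟨x, hx, rfl⟩
  exact h x hx

lemma specNorm_neg (A : Matrix α β ℝ) : specNorm (-A) = specNorm A := by
  have key : ∀ B : Matrix α β ℝ, specNorm (-B) ≤ specNorm B := by
    intro B
    refine specNorm_le fun x hx => ?_
    rw [Matrix.neg_mulVec, vecNorm_neg]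
    exact vecNorm_mulVec_le_specNorm_of_le_one B hx
  refine le_antisymm (key A) ?_
  have := key (-A)
  rwa [neg_neg] at this

lemma specNorm_smul_le (c : ℝ) (A : Matrix α β ℝ) : specNorm (c • A) ≤ |c| * specNorm A := by
  refine specNorm_le fun x hx => ?_
  rw [Matrix.smul_mulVec, vecNorm_smul]
  exact mul_le_mul_of_nonneg_left (vecNorm_mulVec_le_specNorm_of_le_one A hx) (abs_nonneg c)

lemma specNorm_add_le (A B : Matrix α β ℝ) : specNorm (A + B) ≤ specNorm A + specNorm B := by
  refine specNorm_le fun x hx => ?_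
  rw [Matrix.add_mulVec]
  exact (vecNorm_add_le _ _).trans (add_le_add
    (vecNorm_mulVec_le_specNorm_of_le_one A hx) (vecNorm_mulVec_le_specNorm_of_le_one B hx))

lemma abs_dot_mulVec_le (A : Matrix α β ℝ) (x : α → ℝ) (y : β → ℝ) :
    |∑ i, x i * A.mulVec y i| ≤ specNorm A * vecNorm x * vecNorm y :=
  (abs_dot_le x _).trans <| by
    calc vecNorm x * vecNorm (A.mulVec y) ≤ vecNorm x * (specNorm A * vecNorm y) :=
          mul_le_mul_of_nonneg_left (vecNorm_mulVec_le A y) (vecNorm_nonneg x)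
      _ = specNorm A * vecNorm x * vecNorm y := by ring

lemma specNorm_le_of_forall_dot {A : Matrix α β ℝ} {K : ℝ} (hK : 0 ≤ K)
    (h : ∀ (x : α → ℝ) (y : β → ℝ), vecNorm x ≤ 1 → vecNorm y ≤ 1 →
      |∑ i, x i * A.mulVec y i| ≤ K) : specNorm A ≤ K := by
  refine specNorm_le fun y hy => ?_
  set w := A.mulVec y with hw
  rcases eq_or_ne (vecNorm w) 0 with h0 | h0
  · rw [h0]; exact hK
  have hpos : 0 < vecNorm w := lt_of_le_of_ne (vecNorm_nonneg w) (Ne.symm h0)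
  have hu : vecNorm ((vecNorm w)⁻¹ • w) = 1 := by
    rw [vecNorm_smul, abs_of_pos (inv_pos.2 hpos), inv_mul_cancel₀ h0]
  have hdot : ∑ i, ((vecNorm w)⁻¹ • w) i * w i = vecNorm w := by
    have : ∑ i, ((vecNorm w)⁻¹ • w) i * w i = (vecNorm w)⁻¹ * ∑ i, w i ^ 2 := by
      rw [Finset.mul_sum]; exact Finset.sum_congr rfl fun i _ => by
        simp [Pi.smul_apply, smul_eq_mul]; ring
    rw [this, ← vecNorm_sq w, sq]
    field_simp
  have := h _ y hu.le hy
  rw [← hw, hdot, abs_of_pos hpos] at this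
  exact this

end specN


section sig
variable {n : ℕ}

lemma sq_sum_le_one {x : Fin n → ℝ} (hx : vecNorm x ≤ 1) : ∑ i, x i ^ 2 ≤ 1 := by
  have := vecNorm_sq x
  nlinarith [vecNorm_nonneg x]

lemma specNorm_sub_le_sigma2 (hn : 0 < n) (G : Matrix (Fin n) (Fin n) ℝ) (d : ℝ)
    (hd : 0 ≤ d) (h1 : specNorm G = d)
    (h2 : G.mulVec (fun _ => 1) = fun _ => d)
    (h3 : Matrix.vecMul (fun _ => 1) G = fun _ => d) :
    specNorm (G - ((d : ℝ)/(n : ℝ)) • Matrix.of (fun _ _ => (1:ℝ))) ≤ sigma2 G := by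
  have hn' : (0:ℝ) < n := Nat.cast_pos.2 hn
  -- row sums and column sums of G are d
  have hrow : ∀ i, ∑ j, G i j = d := by
    intro i
    have := congrFun h2 i
    simpa [Matrix.mulVec, dotProduct] using this
  have hcol : ∀ j, ∑ i, G i j = d := by
    intro j
    have := congrFun h3 j
    simpa [Matrix.vecMul, dotProduct] using this
  set H := G - ((d : ℝ)/(n : ℝ)) • Matrix.of (fun _ _ => (1:ℝ)) with hH
  refine le_ciInf fun v => ?_
  set S := {c | ∃ x : Fin n → ℝ,
    vecNorm x ≤ 1 ∧ (∑ i, v i * x i) = 0 ∧ c = vecNorm (G.mulVec x)} with hS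
  have hSbdd : BddAbove S := by
    refine ⟨Real.sqrt (∑ i, ∑ j, G i j ^ 2), ?_⟩
    rintro c ⟨x, hx, -, rfl⟩
    exact vecNorm_mulVec_le_frob G hx
  have hS0 : (0:ℝ) ∈ S := ⟨0, by simp [vecNorm_zero], by simp, by simp [Matrix.mulVec_zero, vecNorm_zero]⟩
  refine csSup_le ⟨0, zero_mem_snset H⟩ ?_
  rintro c ⟨x, hx, rfl⟩
  -- decompose x
  set c1 := (∑ j, x j) / n with hc1
  set y : Fin n → ℝ := fun i => x i - c1 with hy
  have hysum : ∑ i, y i = 0 := by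
    simp only [hy, Finset.sum_sub_distrib, Finset.sum_const, Finset.card_univ, Fintype.card_fin,
      nsmul_eq_mul, hc1]
    field_simp
    ring
  have hHx : H.mulVec x = G.mulVec y := by
    funext i
    have lhs : H.mulVec x i = (∑ j, G i j * x j) - (d/(n:ℝ)) * ∑ j, x j := by
      simp only [hH, Matrix.mulVec, dotProduct, Matrix.sub_apply, Matrix.smul_apply,
        Matrix.of_apply, smul_eq_mul, mul_one]
      rw [show ∑ j, (G i j - d/(n:ℝ)) * x j = ∑ j, (G i j * x j - (d/(n:ℝ)) * x j) from
        Finset.sum_congr rfl fun j _ => by ring]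
      rw [Finset.sum_sub_distrib, ← Finset.mul_sum]
    have rhs : G.mulVec y i = (∑ j, G i j * x j) - c1 * d := by
      simp only [Matrix.mulVec, dotProduct, hy]
      rw [show ∑ j, G i j * (x j - c1) = ∑ j, (G i j * x j - c1 * G i j) from
        Finset.sum_congr rfl fun j _ => by ring]
      rw [Finset.sum_sub_distrib, ← Finset.mul_sum, hrow i]
    rw [lhs, rhs, hc1]
    ring
  have hynorm : vecNorm y ≤ 1 := by
    refine le_trans ?_ hx
    unfold vecNorm
    refine Real.sqrt_le_sqrt ?_
    have expand : ∑ i, y i ^ 2 = (∑ i, x i ^2) - n * c1 ^2 := by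
      simp only [hy]
      rw [show ∑ i, (x i - c1)^2 = ∑ i, (x i ^2 - 2*c1*x i + c1^2) from
        Finset.sum_congr rfl fun i _ => by ring]
      rw [Finset.sum_add_distrib, Finset.sum_sub_distrib, ← Finset.mul_sum, Finset.sum_const,
        Finset.card_univ, Fintype.card_fin, nsmul_eq_mul, hc1]
      field_simp
      ring
    rw [expand]
    have hsq : 0 ≤ (n:ℝ) * c1 ^2 := by positivity
    linarith
  rw [hHx]
  -- now bound vecNorm (G.mulVec y) by sSup S
  rcases eq_or_ne (vecNorm y) 0 with h0 | h0
  · rw [vecNorm_eq_zero h0, Matrix.mulVec_zero, vecNorm_zero]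
    exact le_csSup hSbdd hS0
  have ht : 0 < vecNorm y := lt_of_le_of_ne (vecNorm_nonneg y) (Ne.symm h0)
  set t := vecNorm y with htdef
  set e2 : Fin n → ℝ := t⁻¹ • y with he2
  have he2norm : vecNorm e2 = 1 := by
    rw [he2, vecNorm_smul, abs_of_pos (inv_pos.2 ht), inv_mul_cancel₀ h0]
  have he2sum : ∑ i, e2 i = 0 := by
    simp only [he2, Pi.smul_apply, smul_eq_mul, ← Finset.mul_sum, hysum, mul_zero]
  have hGy : G.mulVec y = t • G.mulVec e2 := by
    rw [he2, Matrix.mulVec_smul]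
    funext i; simp only [Pi.smul_apply, smul_eq_mul]
    field_simp
  have hGyn : vecNorm (G.mulVec y) ≤ vecNorm (G.mulVec e2) := by
    rw [hGy, vecNorm_smul, abs_of_pos ht]
    exact mul_le_of_le_one_left (vecNorm_nonneg _) hynorm
  set w := G.mulVec e2 with hw
  have hwsum : ∑ i, w i = 0 := by
    have : ∑ i, w i = ∑ j, (∑ i, G i j) * e2 j := by
      simp only [hw, Matrix.mulVec, dotProduct]
      rw [Finset.sum_comm]
      exact Finset.sum_congr rfl fun j _ => by rw [Finset.sum_mul]
    rw [this]
    rw [show ∑ j, (∑ i, G i j) * e2 j = ∑ j, d * e2 j from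
      Finset.sum_congr rfl fun j _ => by rw [hcol j]]
    rw [← Finset.mul_sum, he2sum, mul_zero]
  have hwle : vecNorm w ≤ d := by
    rw [← h1]
    exact vecNorm_mulVec_le_specNorm_of_le_one G he2norm.le
  have hsn : 0 < Real.sqrt n := Real.sqrt_pos.2 hn'
  have hsn2 : Real.sqrt n ^ 2 = (n:ℝ) := Real.sq_sqrt hn'.le
  set e1 : Fin n → ℝ := fun _ => 1 / Real.sqrt n with he1
  have he1sq : ∑ i, e1 i ^ 2 = 1 := by
    simp only [he1, Finset.sum_const, Finset.card_univ, Fintype.card_fin, nsmul_eq_mul,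
      div_pow, one_pow, hsn2]
    field_simp
  have he1e2 : ∑ i, e1 i * e2 i = 0 := by
    simp only [he1, ← Finset.mul_sum, he2sum, mul_zero]
  have he2sq : ∑ i, e2 i ^ 2 = 1 := by
    rw [← vecNorm_sq, he2norm, one_pow]
  have hge1 : G.mulVec e1 = fun _ => d / Real.sqrt n := by
    funext i
    simp only [Matrix.mulVec, dotProduct, he1]
    rw [show ∑ j, G i j * (1 / Real.sqrt n) = (∑ j, G i j) * (1 / Real.sqrt n) from
      (Finset.sum_mul _ _ _).symm, hrow i]
    ring
  set α := ∑ i, v i * e1 i with hα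
  set β := ∑ i, v i * e2 i with hβ
  have key : ∃ x' : Fin n → ℝ, vecNorm x' ≤ 1 ∧ (∑ i, v i * x' i) = 0 ∧
      vecNorm w ≤ vecNorm (G.mulVec x') := by
    rcases eq_or_ne (Real.sqrt (α^2 + β^2)) 0 with hρ | hρ
    · have hβ0 : β = 0 := by
        have := (Real.sqrt_eq_zero' ).1 hρ
        nlinarith [sq_nonneg α, sq_nonneg β]
      exact ⟨e2, he2norm.le, hβ0, le_refl _⟩
    · set ρ := Real.sqrt (α^2 + β^2) with hρdef
      have hρpos : 0 < ρ := lt_of_le_of_ne (Real.sqrt_nonneg _) (Ne.symm hρ)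
      have hρsq : ρ^2 = α^2 + β^2 := Real.sq_sqrt (by positivity)
      set a := β / ρ with ha
      set b := -α / ρ with hb
      have hab : a^2 + b^2 = 1 := by
        rw [ha, hb, div_pow, div_pow, ← add_div, neg_pow]
        rw [show (-1:ℝ)^2 * α^2 = α^2 by ring, add_comm (β^2), ← hρsq]
        exact div_self (by positivity)
      set x' : Fin n → ℝ := fun i => a * e1 i + b * e2 i with hx'
      have hvx' : ∑ i, v i * x' i = 0 := by
        simp only [hx']
        rw [show ∑ i, v i * (a * e1 i + b * e2 i)
            = a * (∑ i, v i * e1 i) + b * (∑ i, v i * e2 i) by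
          rw [Finset.mul_sum, Finset.mul_sum, ← Finset.sum_add_distrib]
          exact Finset.sum_congr rfl fun i _ => by ring]
        rw [← hα, ← hβ, ha, hb]
        field_simp
        ring
      have hx'sq : ∑ i, x' i ^ 2 = 1 := by
        simp only [hx']
        rw [show ∑ i, (a * e1 i + b * e2 i)^2
            = a^2 * (∑ i, e1 i ^2) + 2*a*b*(∑ i, e1 i * e2 i) + b^2 * (∑ i, e2 i ^2) by
          rw [Finset.mul_sum, Finset.mul_sum, Finset.mul_sum, ← Finset.sum_add_distrib,
            ← Finset.sum_add_distrib]
          exact Finset.sum_congr rfl fun i _ => by ring]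
        rw [he1sq, he1e2, he2sq]
        linear_combination hab
      have hx'norm : vecNorm x' = 1 := by
        rw [vecNorm, hx'sq, Real.sqrt_one]
      have hGx' : G.mulVec x' = fun i => a * (d / Real.sqrt n) + b * w i := by
        funext i
        simp only [Matrix.mulVec, dotProduct, hx', hw]
        rw [show ∑ j, G i j * (a * e1 j + b * e2 j)
            = a * (∑ j, G i j * e1 j) + b * (∑ j, G i j * e2 j) by
          rw [Finset.mul_sum, Finset.mul_sum, ← Finset.sum_add_distrib]
          exact Finset.sum_congr rfl fun j _ => by ring]
        have := congrFun hge1 i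
        simp only [Matrix.mulVec, dotProduct] at this
        rw [this]
      have hGx'sq : ∑ i, (G.mulVec x' i)^2 = a^2 * d^2 + b^2 * ∑ i, w i ^2 := by
        rw [hGx']
        rw [show ∑ i, (a * (d / Real.sqrt n) + b * w i)^2
            = (∑ i : Fin n, (a * (d / Real.sqrt n))^2) + 2*(a * (d / Real.sqrt n))*b*(∑ i, w i)
              + b^2 * (∑ i, w i ^2) by
          rw [Finset.mul_sum, Finset.mul_sum, ← Finset.sum_add_distrib, ← Finset.sum_add_distrib]
          exact Finset.sum_congr rfl fun i _ => by ring]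
        rw [hwsum, mul_zero, add_zero, Finset.sum_const, Finset.card_univ, Fintype.card_fin,
          nsmul_eq_mul]
        congr 1
        rw [mul_pow, show ((d / Real.sqrt n):ℝ)^2 = d^2/(n:ℝ) by rw [div_pow, hsn2]]
        have hnne : (n:ℝ) ≠ 0 := hn'.ne'
        field_simp
      have hwsq_le : ∑ i, w i ^2 ≤ d^2 := by
        have h' : vecNorm w ^2 ≤ d^2 := pow_le_pow_left₀ (vecNorm_nonneg w) hwle 2
        rw [vecNorm_sq] at h'
        exact h'
      have hfinal : vecNorm w ≤ vecNorm (G.mulVec x') := by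
        unfold vecNorm
        refine Real.sqrt_le_sqrt ?_
        rw [hGx'sq]
        have hwnn : 0 ≤ ∑ i, w i ^2 := Finset.sum_nonneg fun i _ => sq_nonneg _
        nlinarith [sq_nonneg a, sq_nonneg b]
      exact ⟨x', hx'norm.le, hvx', hfinal⟩
  obtain ⟨x', h1', h2', h3'⟩ := key
  exact hGyn.trans (h3'.trans (le_csSup hSbdd ⟨x', h1', h2', rfl⟩))
end sig

section had
variable {n r : ℕ}

lemma M_entry {M : Matrix (Fin n) (Fin n) ℝ} {U V : Matrix (Fin n) (Fin r) ℝ} {s : Fin r → ℝ}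
    (hM : M = U * Matrix.diagonal s * Vᵀ) (i j : Fin n) :
    M i j = ∑ p, U i p * s p * V j p := by
  rw [hM, Matrix.mul_apply]
  refine Finset.sum_congr rfl fun p _ => ?_
  rw [Matrix.mul_diagonal, Matrix.transpose_apply]

lemma s_le_specNorm {M : Matrix (Fin n) (Fin n) ℝ} {U V : Matrix (Fin n) (Fin r) ℝ}
    {s : Fin r → ℝ} (hU : Uᵀ * U = 1) (hV : Vᵀ * V = 1) (hs : ∀ p, 0 < s p)
    (hM : M = U * Matrix.diagonal s * Vᵀ) (t : Fin r) : s t ≤ specNorm M := by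
  have hVcol : ∀ p q : Fin r, ∑ j, V j p * V j q = if p = q then (1:ℝ) else 0 := by
    intro p q
    have := congrFun (congrFun hV p) q
    simpa [Matrix.mul_apply, Matrix.transpose_apply, Matrix.one_apply] using this
  have hUcol : ∀ p q : Fin r, ∑ j, U j p * U j q = if p = q then (1:ℝ) else 0 := by
    intro p q
    have := congrFun (congrFun hU p) q
    simpa [Matrix.mul_apply, Matrix.transpose_apply, Matrix.one_apply] using this
  set x : Fin n → ℝ := fun j => V j t with hx
  have hxnorm : vecNorm x = 1 := by
    rw [vecNorm]
    rw [show ∑ j, x j ^2 = ∑ j, V j t * V j t from Finset.sum_congr rfl fun j _ => sq (V j t) ▸ by ring]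
    rw [hVcol t t]
    simp
  have hMx : M.mulVec x = fun i => s t * U i t := by
    funext i
    simp only [Matrix.mulVec, dotProduct, hx]
    rw [show ∑ j, M i j * V j t = ∑ j, ∑ p, (U i p * s p) * (V j p * V j t) from
      Finset.sum_congr rfl fun j _ => by
        rw [M_entry hM, Finset.sum_mul]; exact Finset.sum_congr rfl fun p _ => by ring]
    rw [Finset.sum_comm]
    rw [show ∑ p, ∑ j, (U i p * s p) * (V j p * V j t)
        = ∑ p, (U i p * s p) * ∑ j, V j p * V j t from
      Finset.sum_congr rfl fun p _ => (Finset.mul_sum _ _ _).symm]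
    rw [Finset.sum_congr rfl fun p (_ : p ∈ Finset.univ) => by rw [hVcol p t]]
    rw [show (∑ p, U i p * s p * if p = t then (1:ℝ) else 0)
        = ∑ p, if p = t then U i p * s p else 0 from
      Finset.sum_congr rfl fun p _ => by split <;> simp]
    rw [Finset.sum_ite_eq' Finset.univ t (fun p => U i p * s p)]
    simp [mul_comm]
  have hMxnorm : vecNorm (M.mulVec x) = s t := by
    rw [hMx, vecNorm]
    rw [show ∑ i, (s t * U i t)^2 = s t ^2 * ∑ i, U i t * U i t by
      rw [Finset.mul_sum]; exact Finset.sum_congr rfl fun i _ => by ring]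
    rw [hUcol t t]
    simp [Real.sqrt_mul_self (hs t).le, abs_of_pos (hs t), Real.sqrt_sq (hs t).le]
  calc s t = vecNorm (M.mulVec x) := hMxnorm.symm
    _ ≤ specNorm M := vecNorm_mulVec_le_specNorm_of_le_one M hxnorm.le

lemma hadamard_bound (hn : 0 < n) {H M : Matrix (Fin n) (Fin n) ℝ}
    {U V : Matrix (Fin n) (Fin r) ℝ} {s : Fin r → ℝ} {μ₀ : ℝ}
    (hU : Uᵀ * U = 1) (hV : Vᵀ * V = 1) (hs : ∀ p, 0 < s p)
    (hM : M = U * Matrix.diagonal s * Vᵀ)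
    (hA1U : IncoherentRows U μ₀) (hA1V : IncoherentRows V μ₀) :
    specNorm (Matrix.of fun i j => H i j * M i j) ≤
      specNorm H * (μ₀ * r / n) * specNorm M := by
  have i0 : Fin n := ⟨0, hn⟩
  have hμ : 0 ≤ μ₀ * r / n :=
    le_trans (Finset.sum_nonneg fun k _ => sq_nonneg (U i0 k)) (hA1U i0)
  refine specNorm_le_of_forall_dot
    (mul_nonneg (mul_nonneg (specNorm_nonneg H) hμ) (specNorm_nonneg M)) ?_
  intro x y hx hy
  set a : Fin r → Fin n → ℝ := fun p i => x i * U i p with hadef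
  set b : Fin r → Fin n → ℝ := fun p j => y j * V j p with hbdef
  -- rewrite the bilinear form
  have hform : ∑ i, x i * (Matrix.of fun i j => H i j * M i j).mulVec y i
      = ∑ p, s p * ∑ i, a p i * (H.mulVec (b p)) i := by
    have lhs : ∑ i, x i * (Matrix.of fun i j => H i j * M i j).mulVec y i
        = ∑ i, ∑ j, ∑ p, x i * U i p * s p * (H i j * (y j * V j p)) := by
      refine Finset.sum_congr rfl fun i _ => ?_
      simp only [Matrix.mulVec, dotProduct, Matrix.of_apply]
      rw [Finset.mul_sum]
      refine Finset.sum_congr rfl fun j _ => ?_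
      rw [M_entry hM, Finset.mul_sum, Finset.sum_mul, Finset.mul_sum]
      exact Finset.sum_congr rfl fun p _ => by ring
    have rhs : ∑ p, s p * ∑ i, a p i * (H.mulVec (b p)) i
        = ∑ p, ∑ i, ∑ j, x i * U i p * s p * (H i j * (y j * V j p)) := by
      refine Finset.sum_congr rfl fun p _ => ?_
      rw [Finset.mul_sum]
      refine Finset.sum_congr rfl fun i _ => ?_
      simp only [Matrix.mulVec, dotProduct, hadef, hbdef]
      rw [Finset.mul_sum, Finset.mul_sum]
      exact Finset.sum_congr rfl fun j _ => by ring
    rw [lhs, rhs]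
    exact Eq.trans (Finset.sum_congr rfl fun i _ => Finset.sum_comm) Finset.sum_comm
  rw [hform]
  -- bound
  have sum_sq_bound : ∀ (W : Matrix (Fin n) (Fin r) ℝ) (z : Fin n → ℝ),
      IncoherentRows W μ₀ → vecNorm z ≤ 1 →
      ∑ p, vecNorm (fun i => z i * W i p) ^ 2 ≤ μ₀ * r / n := by
    intro W z hW hz
    have e1 : ∑ p, vecNorm (fun i => z i * W i p) ^ 2 = ∑ i, z i ^2 * ∑ p, W i p ^2 := by
      rw [show (∑ p, vecNorm (fun i => z i * W i p)^2) = ∑ p, ∑ i, (z i * W i p)^2 from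
        Finset.sum_congr rfl fun p _ => by rw [vecNorm_sq]]
      rw [Finset.sum_comm]
      refine Finset.sum_congr rfl fun i _ => ?_
      rw [Finset.mul_sum]
      exact Finset.sum_congr rfl fun p _ => by ring
    calc ∑ p, vecNorm (fun i => z i * W i p) ^ 2 = ∑ i, z i ^2 * ∑ p, W i p ^2 := e1
      _ ≤ ∑ i, z i ^2 * (μ₀ * r / n) :=
          Finset.sum_le_sum fun i _ => mul_le_mul_of_nonneg_left (hW i) (sq_nonneg _)
      _ = (∑ i, z i ^2) * (μ₀ * r / n) := (Finset.sum_mul _ _ _).symm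
      _ ≤ 1 * (μ₀ * r / n) := mul_le_mul_of_nonneg_right (sq_sum_le_one hz) hμ
      _ = μ₀ * r / n := one_mul _
  have hsum_a : ∑ p, vecNorm (a p) ^ 2 ≤ μ₀ * r / n := sum_sq_bound U x hA1U hx
  have hsum_b : ∑ p, vecNorm (b p) ^ 2 ≤ μ₀ * r / n := sum_sq_bound V y hA1V hy
  have hCS : ∑ p, vecNorm (a p) * vecNorm (b p) ≤ μ₀ * r / n := by
    have habnn : 0 ≤ ∑ p, vecNorm (a p) * vecNorm (b p) :=
      Finset.sum_nonneg fun p _ => mul_nonneg (vecNorm_nonneg _) (vecNorm_nonneg _)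
    have hsq : (∑ p, vecNorm (a p) * vecNorm (b p))^2 ≤ (μ₀ * r / n)^2 := by
      refine le_trans (Finset.sum_mul_sq_le_sq_mul_sq Finset.univ _ _) ?_
      rw [sq]
      exact mul_le_mul hsum_a hsum_b
        (Finset.sum_nonneg fun p _ => sq_nonneg _) hμ
    calc ∑ p, vecNorm (a p) * vecNorm (b p)
        = Real.sqrt ((∑ p, vecNorm (a p) * vecNorm (b p))^2) := (Real.sqrt_sq habnn).symm
      _ ≤ Real.sqrt ((μ₀ * r / n)^2) := Real.sqrt_le_sqrt hsq
      _ = μ₀ * r / n := Real.sqrt_sq hμ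
  calc |∑ p, s p * ∑ i, a p i * (H.mulVec (b p)) i|
      ≤ ∑ p, |s p * ∑ i, a p i * (H.mulVec (b p)) i| := Finset.abs_sum_le_sum_abs _ _
    _ = ∑ p, s p * |∑ i, a p i * (H.mulVec (b p)) i| :=
        Finset.sum_congr rfl fun p _ => by rw [abs_mul, abs_of_pos (hs p)]
    _ ≤ ∑ p, s p * (specNorm H * vecNorm (a p) * vecNorm (b p)) :=
        Finset.sum_le_sum fun p _ =>
          mul_le_mul_of_nonneg_left (abs_dot_mulVec_le H (a p) (b p)) (hs p).le
    _ ≤ ∑ p, specNorm M * (specNorm H * vecNorm (a p) * vecNorm (b p)) :=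
        Finset.sum_le_sum fun p _ =>
          mul_le_mul_of_nonneg_right (s_le_specNorm hU hV hs hM p)
            (mul_nonneg (mul_nonneg (specNorm_nonneg H) (vecNorm_nonneg _)) (vecNorm_nonneg _))
    _ = specNorm M * specNorm H * ∑ p, vecNorm (a p) * vecNorm (b p) := by
        rw [Finset.mul_sum]
        exact Finset.sum_congr rfl fun p _ => by ring
    _ ≤ specNorm M * specNorm H * (μ₀ * r / n) :=
        mul_le_mul_of_nonneg_left hCS
          (mul_nonneg (specNorm_nonneg M) (specNorm_nonneg H))
    _ = specNorm H * (μ₀ * r / n) * specNorm M := by ring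
end had

end AuxProofs

/-- best rank-`k` approximation of `P_Ω(M)` approximates `M`. -/
theorem stmt_1 {n d r : ℕ} (hn : 0 < n) (hd : 0 < d) (hr : 0 < r) {C μ₀ : ℝ} (hC : 0 < C)
    (Ω : Finset (Fin n × Fin n)) (hreg : RegularSampling Ω d)
    (hG1 : AssumptionG1 Ω d) (hG2 : AssumptionG2 Ω d C)
    (M : Matrix (Fin n) (Fin n) ℝ) (U V : Matrix (Fin n) (Fin r) ℝ) (s : Fin r → ℝ)
    (hSVD : IsThinSVD M U s V) (hrank : M.rank = r)
    (hA1U : IncoherentRows U μ₀) (hA1V : IncoherentRows V μ₀)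
    (k : ℕ) (hk : r ≤ k) (B : Matrix (Fin n) (Fin n) ℝ) (hBrank : B.rank ≤ k)
    (hBbest : ∀ X : Matrix (Fin n) (Fin n) ℝ, X.rank ≤ k →
      specNorm (sampl Ω M - B) ≤ specNorm (sampl Ω M - X)) :
    specNorm (((n : ℝ) / (d : ℝ)) • B - M) ≤
      2 * C * μ₀ * r / Real.sqrt d * specNorm M := by
  have hn' : (0:ℝ) < n := Nat.cast_pos.2 hn
  have hd' : (0:ℝ) < d := Nat.cast_pos.2 hd
  have hsd : 0 < Real.sqrt d := Real.sqrt_pos.2 hd'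
  have hsd2 : Real.sqrt d * Real.sqrt d = (d:ℝ) := Real.mul_self_sqrt hd'.le
  set G := biadj Ω with hG
  set H : Matrix (Fin n) (Fin n) ℝ := G - ((d:ℝ)/(n:ℝ)) • Matrix.of (fun _ _ => (1:ℝ)) with hH
  set P := sampl Ω M with hP
  obtain ⟨hU, hV, hs, hM⟩ := hSVD
  have hμ : 0 ≤ μ₀ * r / n :=
    le_trans (Finset.sum_nonneg fun p _ => sq_nonneg (U ⟨0, hn⟩ p)) (hA1U ⟨0, hn⟩)
  have hMn : 0 ≤ specNorm M := specNorm_nonneg M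
  -- spectral bound on H
  have key1 : specNorm H ≤ C * Real.sqrt d :=
    (specNorm_sub_le_sigma2 hn G (d:ℝ) hd'.le hG1.1 hG1.2.1 hG1.2.2).trans hG2
  have key2 : specNorm (Matrix.of fun i j => H i j * M i j) ≤
      specNorm H * (μ₀ * r / n) * specNorm M :=
    hadamard_bound hn hU hV hs hM hA1U hA1V
  -- pointwise identity
  have hptw : ((n:ℝ)/(d:ℝ)) • (Matrix.of fun i j => H i j * M i j)
      = ((n:ℝ)/(d:ℝ)) • P - M := by
    ext i j
    simp only [hH, hP, hG, sampl, biadj, Matrix.smul_apply, Matrix.sub_apply, Matrix.of_apply,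
      smul_eq_mul]
    by_cases hmem : (i, j) ∈ Ω <;> simp [hmem] <;> field_simp <;> ring
  -- key bound on (n/d)P - M
  have keyM : specNorm (((n:ℝ)/(d:ℝ)) • P - M) ≤ C * μ₀ * r / Real.sqrt d * specNorm M := by
    rw [← hptw]
    have h1 := specNorm_smul_le ((n:ℝ)/(d:ℝ)) (Matrix.of fun i j => H i j * M i j)
    rw [abs_of_pos (by positivity)] at h1
    have h2 : specNorm H * (μ₀ * r / n) * specNorm M
        ≤ (C * Real.sqrt d) * ((μ₀ * r / n) * specNorm M) := by
      rw [mul_assoc] at *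
      exact mul_le_mul_of_nonneg_right key1 (mul_nonneg hμ hMn)
    have harith : ((n:ℝ)/(d:ℝ)) * ((C * Real.sqrt d) * ((μ₀ * r / n) * specNorm M))
        = C * μ₀ * r / Real.sqrt d * specNorm M := by
      have hstep : C * μ₀ * (r:ℝ) / Real.sqrt d = C * μ₀ * (r:ℝ) * Real.sqrt d / (d:ℝ) := by
        rw [div_eq_div_iff hsd.ne' hd'.ne']
        linear_combination (-(C * μ₀ * (r:ℝ))) * hsd2
      rw [hstep]
      field_simp
    calc specNorm (((n:ℝ)/(d:ℝ)) • (Matrix.of fun i j => H i j * M i j))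
        ≤ ((n:ℝ)/(d:ℝ)) * specNorm (Matrix.of fun i j => H i j * M i j) := h1
      _ ≤ ((n:ℝ)/(d:ℝ)) * ((C * Real.sqrt d) * ((μ₀ * r / n) * specNorm M)) := by
          refine mul_le_mul_of_nonneg_left (key2.trans h2) (by positivity)
      _ = C * μ₀ * r / Real.sqrt d * specNorm M := harith
  -- rank of the competitor
  set X : Matrix (Fin n) (Fin n) ℝ := ((d:ℝ)/(n:ℝ)) • M with hX
  have hXrank : X.rank ≤ k := by
    have : X = (((d:ℝ)/(n:ℝ)) • (1 : Matrix (Fin n) (Fin n) ℝ)) * M := by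
      rw [Matrix.smul_mul, one_mul]
    rw [this]
    exact le_trans (Matrix.rank_mul_le_right _ M) (hrank ▸ hk)
  have hBb := hBbest X hXrank
  -- assemble
  have hsplit : ((n:ℝ)/(d:ℝ)) • B - M
      = ((n:ℝ)/(d:ℝ)) • (B - P) + (((n:ℝ)/(d:ℝ)) • P - M) := by
    ext i j
    simp [Matrix.smul_apply, Matrix.sub_apply, Matrix.add_apply, mul_sub]
  have hPBX : P - X = ((d:ℝ)/(n:ℝ)) • (((n:ℝ)/(d:ℝ)) • P - M) := by
    ext i j
    simp only [hX, Matrix.smul_apply, Matrix.sub_apply, smul_eq_mul]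
    field_simp
  have hterm1 : specNorm (((n:ℝ)/(d:ℝ)) • (B - P)) ≤ C * μ₀ * r / Real.sqrt d * specNorm M := by
    have e1 : specNorm (B - P) = specNorm (P - B) := by
      rw [← specNorm_neg (P - B), neg_sub]
    have e2 : specNorm (P - X) ≤ ((d:ℝ)/(n:ℝ)) * specNorm (((n:ℝ)/(d:ℝ)) • P - M) := by
      rw [hPBX]
      have := specNorm_smul_le ((d:ℝ)/(n:ℝ)) (((n:ℝ)/(d:ℝ)) • P - M)
      rwa [abs_of_pos (by positivity)] at this
    calc specNorm (((n:ℝ)/(d:ℝ)) • (B - P))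
        ≤ ((n:ℝ)/(d:ℝ)) * specNorm (B - P) := by
          have := specNorm_smul_le ((n:ℝ)/(d:ℝ)) (B - P)
          rwa [abs_of_pos (by positivity)] at this
      _ ≤ ((n:ℝ)/(d:ℝ)) * specNorm (P - X) := by
          rw [e1]
          exact mul_le_mul_of_nonneg_left hBb (by positivity)
      _ ≤ ((n:ℝ)/(d:ℝ)) * (((d:ℝ)/(n:ℝ)) * specNorm (((n:ℝ)/(d:ℝ)) • P - M)) :=
          mul_le_mul_of_nonneg_left e2 (by positivity)
      _ = specNorm (((n:ℝ)/(d:ℝ)) • P - M) := by field_simp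
      _ ≤ C * μ₀ * r / Real.sqrt d * specNorm M := keyM
  calc specNorm (((n:ℝ)/(d:ℝ)) • B - M)
      ≤ specNorm (((n:ℝ)/(d:ℝ)) • (B - P)) + specNorm (((n:ℝ)/(d:ℝ)) • P - M) := by
        rw [hsplit]; exact specNorm_add_le _ _
    _ ≤ C * μ₀ * r / Real.sqrt d * specNorm M + C * μ₀ * r / Real.sqrt d * specNorm M :=
        add_le_add hterm1 keyM
    _ = 2 * C * μ₀ * r / Real.sqrt d * specNorm M := by ring
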